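/- Let λ ∈ (0,1). The function f(x) = λ√x + 1 − λ maps [1,∞) into [1,∞), satisfies |f(x) − f(z)| ≤ (λ/2)|x − z| for x, z ≥ 1, and the restriction of the natural logarithm to [1,∞) satisfies log x = 2 log(λ√x + 1 − λ) + log( x / (λ√x + 1 − λ)² ) for every x ≥ 1; moreover log is the unique Lipschitzian solution φ : [1,∞) → ℝ of φ(x) = 2 φ(λ√x + 1 − λ) + log( x / (λ√x + 1 − λ)² ). -/

import Mathlib

open MeasureTheory

section aux
variable (lam : ℝ)

private lemma sqrt_ge_one {x : ℝ} (hx : 1 ≤ x) : 1 ≤ Real.sqrt x := by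
  nlinarith [Real.sq_sqrt (by linarith : (0:ℝ) ≤ x), Real.sqrt_nonneg x]

private lemma f_ge_one (hl0 : 0 < lam) {x : ℝ} (hx : 1 ≤ x) :
    1 ≤ lam * Real.sqrt x + 1 - lam := by
  nlinarith [sqrt_ge_one hx]

private lemma f_lip (hl0 : 0 < lam) {x z : ℝ} (hx : 1 ≤ x) (hz : 1 ≤ z) :
    |(lam * Real.sqrt x + 1 - lam) - (lam * Real.sqrt z + 1 - lam)| ≤
      lam / 2 * |x - z| := by
  have hsx := sqrt_ge_one hx
  have hsz := sqrt_ge_one hz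
  have hprod : (Real.sqrt x - Real.sqrt z) * (Real.sqrt x + Real.sqrt z) = x - z := by
    have h1 := Real.sq_sqrt (by linarith : (0:ℝ) ≤ x)
    have h2 := Real.sq_sqrt (by linarith : (0:ℝ) ≤ z)
    nlinarith
  have hkey : |Real.sqrt x - Real.sqrt z| * 2 ≤ |x - z| := by
    calc |Real.sqrt x - Real.sqrt z| * 2
        ≤ |Real.sqrt x - Real.sqrt z| * (Real.sqrt x + Real.sqrt z) := by
          have := abs_nonneg (Real.sqrt x - Real.sqrt z)
          nlinarith
      _ = |Real.sqrt x - Real.sqrt z| * |Real.sqrt x + Real.sqrt z| := by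
          rw [abs_of_pos (by linarith : (0:ℝ) < Real.sqrt x + Real.sqrt z)]
      _ = |(Real.sqrt x - Real.sqrt z) * (Real.sqrt x + Real.sqrt z)| := (abs_mul _ _).symm
      _ = |x - z| := by rw [hprod]
  have : (lam * Real.sqrt x + 1 - lam) - (lam * Real.sqrt z + 1 - lam)
      = lam * (Real.sqrt x - Real.sqrt z) := by ring
  rw [this, abs_mul, abs_of_pos hl0]
  nlinarith

private lemma log_id (hl0 : 0 < lam) {x : ℝ} (hx : 1 ≤ x) :
    Real.log x = 2 * Real.log (lam * Real.sqrt x + 1 - lam) +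
      Real.log (x / (lam * Real.sqrt x + 1 - lam) ^ 2) := by
  have hf := f_ge_one lam hl0 hx
  rw [Real.log_div (by linarith) (pow_ne_zero _ (by linarith)), Real.log_pow]
  push_cast
  ring

private lemma log_lip {x z : ℝ} (hx : 1 ≤ x) (hz : 1 ≤ z) :
    |Real.log x - Real.log z| ≤ |x - z| := by
  have key : ∀ a b : ℝ, 1 ≤ a → a ≤ b → Real.log b - Real.log a ≤ b - a := by
    intro a b ha hab
    have hdiv : Real.log b - Real.log a = Real.log (b / a) := by
      rw [Real.log_div (by linarith) (by linarith)]
    rw [hdiv]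
    have h1 := Real.log_le_sub_one_of_pos (div_pos (show (0:ℝ) < b by linarith) (show (0:ℝ) < a by linarith))
    have h2 : b / a - 1 = (b - a) / a := by field_simp
    have h3 : (b - a) / a ≤ b - a := by
      apply div_le_self (by linarith) (by linarith)
    linarith
  rcases le_total x z with h | h
  · rw [abs_of_nonpos (by have := Real.log_le_log (by linarith) h; linarith),
      abs_of_nonpos (by linarith)]
    have := key x z hx h
    linarith
  · rw [abs_of_nonneg (by have := Real.log_le_log (by linarith) h; linarith),
      abs_of_nonneg (by linarith)]
    exact key z x hz h

end aux

theorem stmt_11 (lam : ℝ) (hlam : lam ∈ Set.Ioo (0 : ℝ) 1) :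
    (∀ x : ℝ, 1 ≤ x → 1 ≤ lam * Real.sqrt x + 1 - lam) ∧
    (∀ x z : ℝ, 1 ≤ x → 1 ≤ z →
      |(lam * Real.sqrt x + 1 - lam) - (lam * Real.sqrt z + 1 - lam)| ≤
        lam / 2 * |x - z|) ∧
    (∀ x : ℝ, 1 ≤ x →
      Real.log x = 2 * Real.log (lam * Real.sqrt x + 1 - lam) +
        Real.log (x / (lam * Real.sqrt x + 1 - lam) ^ 2)) ∧
    (∀ φ : ℝ → ℝ,
      (∃ K : ℝ, ∀ x z : ℝ, 1 ≤ x → 1 ≤ z → |φ x - φ z| ≤ K * |x - z|) →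
      (∀ x : ℝ, 1 ≤ x →
        φ x = 2 * φ (lam * Real.sqrt x + 1 - lam) +
          Real.log (x / (lam * Real.sqrt x + 1 - lam) ^ 2)) →
      ∀ x : ℝ, 1 ≤ x → φ x = Real.log x) := by
  obtain ⟨hl0, hl1⟩ := hlam
  refine ⟨fun x hx => f_ge_one lam hl0 hx,
    fun x z hx hz => f_lip lam hl0 hx hz,
    fun x hx => log_id lam hl0 hx, ?_⟩
  rintro φ ⟨K, hK⟩ hφ x hx
  set f : ℝ → ℝ := fun y => lam * Real.sqrt y + 1 - lam with hf
  set ψ : ℝ → ℝ := fun y => φ y - Real.log y with hψdef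
  have hf1 : f 1 = 1 := by simp [hf]
  have hψrec : ∀ y : ℝ, 1 ≤ y → ψ y = 2 * ψ (f y) := by
    intro y hy
    have h1 := hφ y hy
    have h2 := log_id lam hl0 hy
    simp only [hψdef, hf]
    linarith
  have hψ1 : ψ 1 = 0 := by
    have := hψrec 1 le_rfl
    rw [hf1] at this
    linarith
  have hψlip : ∀ a b : ℝ, 1 ≤ a → 1 ≤ b → |ψ a - ψ b| ≤ (|K| + 1) * |a - b| := by
    intro a b ha hb
    have h1 := hK a b ha hb
    have h2 := log_lip ha hb
    have h3 : |ψ a - ψ b| ≤ |φ a - φ b| + |Real.log a - Real.log b| := by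
      simp only [hψdef]
      have : φ a - Real.log a - (φ b - Real.log b)
          = (φ a - φ b) + -(Real.log a - Real.log b) := by ring
      rw [this]
      exact (abs_add_le _ _).trans (by rw [abs_neg])
    have h4 : K * |a - b| ≤ |K| * |a - b| := by
      have := le_abs_self K
      nlinarith [abs_nonneg (a - b)]
    nlinarith
  -- induction on iterates
  have key : ∀ n : ℕ, 1 ≤ f^[n] x ∧ f^[n] x - 1 ≤ (lam / 2) ^ n * (x - 1) ∧
      ψ x = 2 ^ n * ψ (f^[n] x) := by
    intro n
    induction n with
    | zero => exact ⟨hx, by simp, by simp⟩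
    | succ n ih =>
      obtain ⟨h1, h2, h3⟩ := ih
      have hnext : f^[n + 1] x = f (f^[n] x) := Function.iterate_succ_apply' f n x
      have hge : 1 ≤ f (f^[n] x) := f_ge_one lam hl0 h1
      have hcontr : f (f^[n] x) - 1 ≤ lam / 2 * (f^[n] x - 1) := by
        have := f_lip lam hl0 h1 (le_refl (1:ℝ))
        simp only [Real.sqrt_one, mul_one] at this
        have heq : lam * Real.sqrt (f^[n] x) + 1 - lam - (lam + 1 - lam)
            = f (f^[n] x) - 1 := by simp only [hf]; ring
        rw [heq, abs_of_nonneg (by linarith), abs_of_nonneg (by linarith)] at this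
        exact this
      refine ⟨by rw [hnext]; exact hge, ?_, ?_⟩
      · rw [hnext]
        calc f (f^[n] x) - 1 ≤ lam / 2 * (f^[n] x - 1) := hcontr
          _ ≤ lam / 2 * ((lam / 2) ^ n * (x - 1)) := by
              apply mul_le_mul_of_nonneg_left h2 (by linarith)
          _ = (lam / 2) ^ (n + 1) * (x - 1) := by ring
      · rw [hnext, h3, hψrec _ h1]; ring
  have hbound : ∀ n : ℕ, |ψ x| ≤ ((|K| + 1) * (x - 1)) * lam ^ n := by
    intro n
    obtain ⟨h1, h2, h3⟩ := key n
    have h4 : |ψ (f^[n] x)| ≤ (|K| + 1) * ((lam / 2) ^ n * (x - 1)) := by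
      have := hψlip (f^[n] x) 1 h1 le_rfl
      rw [hψ1, sub_zero,
        show |f^[n] x - 1| = f^[n] x - 1 from abs_of_nonneg (by linarith)] at this
      calc |ψ (f^[n] x)| ≤ (|K| + 1) * (f^[n] x - 1) := this
        _ ≤ (|K| + 1) * ((lam / 2) ^ n * (x - 1)) := by
            apply mul_le_mul_of_nonneg_left h2 (by positivity)
  
    calc |ψ x| = 2 ^ n * |ψ (f^[n] x)| := by
          rw [h3, abs_mul, abs_of_nonneg (by positivity : (0:ℝ) ≤ 2 ^ n)]
      _ ≤ 2 ^ n * ((|K| + 1) * ((lam / 2) ^ n * (x - 1))) := by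
          apply mul_le_mul_of_nonneg_left h4 (by positivity)
      _ = ((|K| + 1) * (x - 1)) * lam ^ n := by
          rw [div_pow]
          field_simp
  have htend : Filter.Tendsto (fun n : ℕ => ((|K| + 1) * (x - 1)) * lam ^ n)
      Filter.atTop (nhds 0) := by
    have := (tendsto_pow_atTop_nhds_zero_of_lt_one (le_of_lt hl0) hl1).const_mul
      ((|K| + 1) * (x - 1))
    simpa using this
  have : |ψ x| ≤ 0 := ge_of_tendsto' htend hbound
  have : ψ x = 0 := by
    have := abs_nonneg (ψ x); linarith [abs_nonneg (ψ x),
      abs_eq_zero.mp (le_antisymm ‹|ψ x| ≤ 0› (abs_nonneg _))]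
  simp only [hψdef] at this
  linarith
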